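/- Let B be a GA–Rota–Baxter operator on a group G with H = Im B and K = ker B. Then h² K h^{-2} ⊆ K for every h ∈ H. -/

import Mathlib

/-- For a GA–Rota–Baxter operator `B` on `G` with `H = Im B` and `K = ker B`,
one has `h² K h⁻² ⊆ K` for all `h ∈ H`. -/
theorem stmt_8 {G : Type*} [Group G] (B : G → G)
    (hB : ∀ g h : G, B g * B h = B (g * B g * h * (B g)⁻¹))
    (hGA : ∀ g h : G,
      (B g * B h = B (B g * h) ∧ B (g * B h) = B (g * h)) ∨
      (B g * B h = B (g * B h) ∧ B (B g * h) = B (g * h))) :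
    ∀ h : G, h ∈ Set.range B → ∀ x : G, B x = 1 →
      B (h ^ 2 * x * (h ^ 2)⁻¹) = 1 := by
  have h1 : B 1 = 1 := by
    have e := hB 1 1
    simp only [one_mul, mul_one, mul_inv_cancel] at e
    exact mul_eq_right.mp e
  intro h hh x hx
  obtain ⟨g0, hg0⟩ := hh
  have hBh : B h = h := by
    rcases hGA g0 1 with ⟨e1, _⟩ | ⟨_, e2⟩
    · rw [h1, mul_one, hg0] at e1
      exact e1.symm
    · rw [mul_one, mul_one, hg0] at e2
      rw [e2]
  have hBinv : B h⁻¹ = h⁻¹ := by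
    have e := hB h h⁻¹
    rw [hBh] at e
    have : h * B h⁻¹ = 1 := by
      rw [e]
      have : h * h * h⁻¹ * h⁻¹ = 1 := by group
      rw [this, h1]
    exact eq_inv_of_mul_eq_one_right this
  have hv : B (h * h * x * h⁻¹) = h := by
    have e := hB h x
    rw [hBh, hx, mul_one] at e
    exact e.symm
  have e := hB (h * h * x * h⁻¹) h⁻¹
  rw [hv, hBinv, mul_inv_cancel] at e
  have key : h * h * x * h⁻¹ * h * h⁻¹ * h⁻¹ = h ^ 2 * x * (h ^ 2)⁻¹ := by
    simp [pow_two, mul_inv_rev, mul_assoc]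
  rw [key] at e
  exact e.symm
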